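/- Let P be a submonoid of a group G. For neutral words α and β in P (even-length tuples with alternating product equal to e), the concatenation αβ is neutral and K(αβ) = K(α) ∩ K(β), where K is the constructible ideal associated to a word. -/
import Mathlib


/-- The alternating product `p₁⁻¹p₂⋯p_{2k-1}⁻¹p_{2k}` of a word, given as a list of
pairs `[(p₁,p₂),…,(p_{2k-1},p_{2k})]`. -/
def wordProd {G : Type*} [Group G] (w : List (G × G)) : G :=
  (w.map fun x => x.1⁻¹ * x.2).prod

/-- The iterated quotient set `Q(α) = {e, p_{2k}⁻¹p_{2k-1}, p_{2k}⁻¹p_{2k-1}p_{2k-2}⁻¹p_{2k-3}, …}`. -/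
def quotSet {G : Type*} [Group G] (w : List (G × G)) : Set G :=
  Set.range fun j : ℕ => ((w.reverse.take j).map fun x => x.2⁻¹ * x.1).prod

/-- The constructible set `K(α) = ⋂_{g ∈ Q(α)} (gP ∩ P)`, as a subset of `G`. -/
def KSet {G : Type*} [Group G] (P : Submonoid G) (w : List (G × G)) : Set G :=
  {x : G | x ∈ P ∧ ∀ g ∈ quotSet w, ∃ p ∈ P, x = g * p}

lemma quotSet_eq {G : Type*} [Group G] (w : List (G × G)) :
    quotSet w = Set.range fun j : ℕ => ((w.reverse.map fun x => x.2⁻¹ * x.1).take j).prod := by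
  unfold quotSet
  simp [List.map_take]

lemma rev_prod {G : Type*} [Group G] (w : List (G × G)) :
    (w.reverse.map fun x => x.2⁻¹ * x.1).prod = (wordProd w)⁻¹ := by
  induction w with
  | nil => simp [wordProd]
  | cons a t ih =>
    simp only [wordProd, List.reverse_cons, List.map_append, List.map_cons, List.map_nil,
      List.prod_append, List.prod_cons, List.prod_nil, mul_one, mul_inv_rev]
    rw [show ((List.map (fun x => x.2⁻¹ * x.1) t.reverse).prod) = (wordProd t)⁻¹ from ih]
    simp [wordProd, mul_inv_rev]

lemma quotSet_append {G : Type*} [Group G] (w₁ w₂ : List (G × G)) (h₂ : wordProd w₂ = 1) :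
    quotSet (w₁ ++ w₂) = quotSet w₁ ∪ quotSet w₂ := by
  classical
  set f : G × G → G := fun x => x.2⁻¹ * x.1
  have key : (w₁ ++ w₂).reverse.map f = w₂.reverse.map f ++ w₁.reverse.map f := by
    simp
  ext g
  simp only [quotSet_eq, Set.mem_union, Set.mem_range]
  constructor
  · rintro ⟨j, rfl⟩
    by_cases hj : j ≤ (w₂.reverse.map f).length
    · right
      exact ⟨j, by rw [key, List.take_append_of_le_length hj]⟩
    · left
      refine ⟨j - (w₂.reverse.map f).length, ?_⟩
      rw [key, List.take_append, List.take_of_length_le (le_of_not_ge hj),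
        List.prod_append]
      have : (w₂.reverse.map f).prod = 1 := by rw [rev_prod w₂, h₂]; simp
      rw [this, one_mul]
  · rintro (⟨j, rfl⟩ | ⟨j, rfl⟩)
    · refine ⟨(w₂.reverse.map f).length + j, ?_⟩
      rw [key, List.take_append, List.take_of_length_le (by omega),
        List.prod_append, Nat.add_sub_cancel_left]
      have : (w₂.reverse.map f).prod = 1 := by rw [rev_prod w₂, h₂]; simp
      rw [this, one_mul]
    · refine ⟨min j (List.map f w₂.reverse).length, ?_⟩
      rw [key, List.take_append_of_le_length (min_le_right _ _), ← List.take_take,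
        List.take_length]

theorem stmt_7 {G : Type*} [Group G] (P : Submonoid G) (w₁ w₂ : List (G × G))
    (hw₁ : ∀ x ∈ w₁, x.1 ∈ P ∧ x.2 ∈ P) (hw₂ : ∀ x ∈ w₂, x.1 ∈ P ∧ x.2 ∈ P)
    (h₁ : wordProd w₁ = 1) (h₂ : wordProd w₂ = 1) :
    wordProd (w₁ ++ w₂) = 1 ∧ KSet P (w₁ ++ w₂) = KSet P w₁ ∩ KSet P w₂ := by
  constructor
  · simp [wordProd] at h₁ h₂ ⊢
    simp [h₁, h₂]
  · ext x
    simp only [KSet, quotSet_append w₁ w₂ h₂, Set.mem_union, Set.mem_setOf_eq,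
      Set.mem_inter_iff]
    constructor
    · rintro ⟨hx, h⟩
      exact ⟨⟨hx, fun g hg => h g (Or.inl hg)⟩, ⟨hx, fun g hg => h g (Or.inr hg)⟩⟩
    · rintro ⟨⟨hx, ha⟩, ⟨-, hb⟩⟩
      exact ⟨hx, fun g hg => hg.elim (ha g) (hb g)⟩
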